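/- For any symmetric-about-c density γ(μ;c), if x > c > 0, then the conditional posterior probability P(μ ≤ x | X = x, μ ≠ 0) is at least P(μ > x | X = x, μ ≠ 0), where the posterior is with respect to the prior (1−w)δ₀ + w γ(·;c) and likelihood X | μ ∼ N(μ,1). Consequently the posterior median δ(x;w,c) satisfies δ(x;w,c) ≤ x for x > c > 0. -/

import Mathlib

open MeasureTheory Real

/-- Standard normal density. -/
noncomputable def stdN (x : ℝ) : ℝ := (Real.sqrt (2 * Real.pi))⁻¹ * Real.exp (-x ^ 2 / 2)

/-- Convolution `g(x;c) = ∫ φ(x−μ) γ₀(μ−c) dμ`. -/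
noncomputable def conv (γ₀ : ℝ → ℝ) (c x : ℝ) : ℝ := ∫ μ : ℝ, stdN (x - μ) * γ₀ (μ - c)

/-- Marginal density `m(x;w,c) = (1−w)φ(x) + w g(x;c)`. -/
noncomputable def marg (γ₀ : ℝ → ℝ) (w c x : ℝ) : ℝ := (1 - w) * stdN x + w * conv γ₀ c x

/-- Posterior CDF of `μ` given `X = x` under the prior `(1−w)δ₀ + w γ₀(·−c)`
and likelihood `X | μ ∼ N(μ,1)`. -/
noncomputable def postCDF (γ₀ : ℝ → ℝ) (w c x t : ℝ) : ℝ :=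
  ((1 - w) * stdN x * (if (0:ℝ) ≤ t then 1 else 0)
    + w * ∫ μ in Set.Iic t, stdN (x - μ) * γ₀ (μ - c)) / marg γ₀ w c x

/-- Posterior median. -/
noncomputable def postMedian (γ₀ : ℝ → ℝ) (w c x : ℝ) : ℝ :=
  sInf {t : ℝ | 1 / 2 ≤ postCDF γ₀ w c x t}

lemma stdN_pos (y : ℝ) : 0 < stdN y := by
  unfold stdN
  positivity

lemma stdN_le (y : ℝ) : stdN y ≤ (Real.sqrt (2 * Real.pi))⁻¹ := by
  unfold stdN
  have h1 : Real.exp (-y ^ 2 / 2) ≤ 1 := by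
    rw [Real.exp_le_one_iff]; nlinarith [sq_nonneg y]
  have h2 : (0:ℝ) ≤ (Real.sqrt (2 * Real.pi))⁻¹ := by positivity
  nlinarith

lemma stdN_meas : Measurable stdN := by
  unfold stdN; fun_prop

lemma stdN_neg (y : ℝ) : stdN (-y) = stdN y := by unfold stdN; ring_nf

/-- For a density `γ₀` symmetric about `0` and unimodal, if `x > c > 0` then the
posterior probability `P(μ ≤ x | X = x, μ ≠ 0)` is at least `P(μ > x | X = x, μ ≠ 0)`,
and consequently the posterior median satisfies `δ(x;w,c) ≤ x`. -/
theorem stmt1 (γ₀ : ℝ → ℝ) (hmeas : Measurable γ₀) (hnonneg : ∀ u, 0 ≤ γ₀ u)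
    (hint : Integrable γ₀) (hdens : ∫ u : ℝ, γ₀ u = 1)
    (hsymm : ∀ u, γ₀ (-u) = γ₀ u)
    (hunimodal : ∀ u v : ℝ, |u| ≤ |v| → γ₀ v ≤ γ₀ u)
    (w c x : ℝ) (hw : 0 < w) (hw1 : w ≤ 1) (hc : 0 < c) (hx : c < x) :
    (∫ μ in Set.Ioi x, stdN (x - μ) * γ₀ (μ - c)) / conv γ₀ c x
        ≤ (∫ μ in Set.Iic x, stdN (x - μ) * γ₀ (μ - c)) / conv γ₀ c x ∧
      postMedian γ₀ w c x ≤ x := by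
  have htpos : 0 < x - c := by linarith
  -- global integrability of the integrand
  have hF_int : Integrable (fun μ => stdN (x - μ) * γ₀ (μ - c)) := by
    refine Integrable.bdd_mul (c := (Real.sqrt (2 * Real.pi))⁻¹) (hint.comp_sub_right c) ?_ ?_
    · exact (stdN_meas.comp (measurable_const.sub measurable_id)).aestronglyMeasurable
    · exact Filter.Eventually.of_forall fun y => by
        rw [Real.norm_eq_abs, abs_of_pos (stdN_pos _)]; exact stdN_le _
  -- change of variables for the upper tail: μ = v + x
  have hA : (∫ μ in Set.Ioi x, stdN (x - μ) * γ₀ (μ - c))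
      = ∫ v in Set.Ioi (0:ℝ), stdN v * γ₀ (x - c + v) := by
    have hmp : MeasurePreserving (fun v : ℝ => v + x) volume volume :=
      measurePreserving_add_right volume x
    have := hmp.setIntegral_preimage_emb (MeasurableEquiv.addRight x).measurableEmbedding
      (fun μ => stdN (x - μ) * γ₀ (μ - c)) (Set.Ioi x)
    have hpre : (fun v : ℝ => v + x) ⁻¹' Set.Ioi x = Set.Ioi 0 := by
      ext v; simp
    rw [hpre] at this
    rw [← this]
    refine setIntegral_congr_fun measurableSet_Ioi fun v _ => ?_
    show stdN (x - (v + x)) * γ₀ (v + x - c) = stdN v * γ₀ (x - c + v)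
    rw [show x - (v + x) = -v by ring, stdN_neg, show v + x - c = x - c + v by ring]
  -- change of variables for the lower part: μ = x - v
  have hB : (∫ μ in Set.Iic x, stdN (x - μ) * γ₀ (μ - c))
      = ∫ v in Set.Ici (0:ℝ), stdN v * γ₀ (x - c - v) := by
    have hmp : MeasurePreserving (fun v : ℝ => x - v) volume volume :=
      Measure.measurePreserving_sub_left volume x
    have := hmp.setIntegral_preimage_emb (MeasurableEquiv.subLeft x).measurableEmbedding
      (fun μ => stdN (x - μ) * γ₀ (μ - c)) (Set.Iic x)
    have hpre : (fun v : ℝ => x - v) ⁻¹' Set.Iic x = Set.Ici 0 := by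
      ext v; simp
    rw [hpre] at this
    rw [← this]
    refine setIntegral_congr_fun measurableSet_Ici fun v _ => ?_
    show stdN (x - (x - v)) * γ₀ (x - v - c) = stdN v * γ₀ (x - c - v)
    rw [show x - (x - v) = v by ring, show x - v - c = x - c - v by ring]
  -- integrability of the transformed integrands
  have hG_int : Integrable (fun v => stdN v * γ₀ (x - c - v)) := by
    refine Integrable.bdd_mul (c := (Real.sqrt (2 * Real.pi))⁻¹) (hint.comp_sub_left (x - c)) stdN_meas.aestronglyMeasurable ?_
    exact Filter.Eventually.of_forall fun y => by
      rw [Real.norm_eq_abs, abs_of_pos (stdN_pos _)]; exact stdN_le _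
  have hH_int : Integrable (fun v => stdN v * γ₀ (x - c + v)) := by
    have : Integrable (fun v : ℝ => γ₀ (x - c + v)) := by
      have := hint.comp_add_left (x - c)
      simpa using this
    refine Integrable.bdd_mul (c := (Real.sqrt (2 * Real.pi))⁻¹) this stdN_meas.aestronglyMeasurable ?_
    exact Filter.Eventually.of_forall fun y => by
      rw [Real.norm_eq_abs, abs_of_pos (stdN_pos _)]; exact stdN_le _
  -- the key inequality
  have hkey : (∫ μ in Set.Ioi x, stdN (x - μ) * γ₀ (μ - c))
      ≤ ∫ μ in Set.Iic x, stdN (x - μ) * γ₀ (μ - c) := by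
    rw [hA, hB, integral_Ici_eq_integral_Ioi]
    refine setIntegral_mono_on hH_int.integrableOn hG_int.integrableOn measurableSet_Ioi ?_
    intro v hv
    have hv0 : 0 < v := hv
    have : γ₀ (x - c + v) ≤ γ₀ (x - c - v) := by
      refine hunimodal _ _ ?_
      have h1 : |x - c - v| ≤ |x - c| + |v| := abs_sub _ _
      rw [abs_of_pos htpos, abs_of_pos hv0] at h1
      rw [abs_of_pos (by linarith : (0:ℝ) < x - c + v)]
      linarith
    have := stdN_pos v
    nlinarith
  -- positivity of conv
  have hconv_pos : 0 < conv γ₀ c x := by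
    rw [conv, integral_pos_iff_support_of_nonneg_ae
      (Filter.Eventually.of_forall fun μ => mul_nonneg (stdN_pos _).le (hnonneg _)) hF_int]
    have hsupp : Function.support (fun μ => stdN (x - μ) * γ₀ (μ - c))
        = Function.support (fun μ => γ₀ (μ - c)) := by
      ext μ
      simp [Function.mem_support, mul_eq_zero, (stdN_pos (x - μ)).ne']
    rw [hsupp]
    by_contra h
    push_neg at h
    have h0 : volume (Function.support (fun μ => γ₀ (μ - c))) = 0 := le_antisymm h zero_le
    have hae : (fun μ => γ₀ (μ - c)) =ᵐ[volume] 0 := by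
      filter_upwards [measure_eq_zero_iff_ae_notMem.mp h0] with μ hμ
      simpa [Function.mem_support] using hμ
    have : (∫ μ : ℝ, γ₀ (μ - c)) = 0 := integral_eq_zero_of_ae hae
    rw [integral_sub_right_eq_self γ₀ c, hdens] at this
    norm_num at this
  constructor
  · gcongr
  -- second part
  have hBA : conv γ₀ c x = (∫ μ in Set.Iic x, stdN (x - μ) * γ₀ (μ - c))
      + ∫ μ in Set.Ioi x, stdN (x - μ) * γ₀ (μ - c) := by
    rw [conv, ← intervalIntegral.integral_Iic_add_Ioi hF_int.integrableOn hF_int.integrableOn]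
  have hmarg_pos : 0 < marg γ₀ w c x := by
    have h1 : 0 ≤ (1 - w) * stdN x := mul_nonneg (by linarith) (stdN_pos _).le
    have h2 : 0 < w * conv γ₀ c x := mul_pos hw hconv_pos
    rw [marg]; linarith
  have hx0 : (0:ℝ) ≤ x := by linarith
  have hmem : x ∈ {t : ℝ | 1 / 2 ≤ postCDF γ₀ w c x t} := by
    show (1:ℝ) / 2 ≤ postCDF γ₀ w c x x
    rw [postCDF, if_pos hx0, le_div_iff₀ hmarg_pos]
    rw [marg, hBA]
    have h1 : 0 ≤ (1 - w) * stdN x := mul_nonneg (by linarith) (stdN_pos _).le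
    nlinarith
  rw [postMedian]
  by_cases hbdd : BddBelow {t : ℝ | 1 / 2 ≤ postCDF γ₀ w c x t}
  · exact csInf_le hbdd hmem
  · rw [Real.sInf_of_not_bddBelow hbdd]; exact hx0
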